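/- Let q be an odd prime power and n ≥ 1. The even integer d_n := q^n + 1 is supersingular and satisfies I_q(d_n) ≥ (log √q) · d_n / log d_n, where I_q(D) := ∑_{e | D} φ(e)/o_q(e) (with the convention φ(1)/o_q(1) = 0, i.e., the e = 1 term contributes 0). -/

import Mathlib

/-- `I_q(D) = ∑_{e ∣ D, e > 1} φ(e) / o_q(e)`, where `o_q(e)` is the multiplicative
order of `q` modulo `e` (the term `e = 1` contributes `0`). -/
noncomputable def Iq (q D : ℕ) : ℝ :=
  ∑ e ∈ D.divisors.filter (fun e => 1 < e),
    (Nat.totient e : ℝ) / (orderOf (q : ZMod e) : ℝ)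

theorem supersingular_even_sequence (q n : ℕ) (hq : Odd q) (hqpp : IsPrimePow q)
    (hn : 1 ≤ n) :
    Even (q ^ n + 1) ∧ (∃ a : ℕ, 1 ≤ a ∧ (q ^ n + 1) ∣ q ^ a + 1) ∧
    Iq q (q ^ n + 1)
      ≥ Real.log (Real.sqrt q) * ((q : ℝ) ^ n + 1) / Real.log ((q : ℝ) ^ n + 1) := by
  have hq2 : 2 ≤ q := hqpp.two_le
  have hqn2 : 2 ≤ q ^ n := le_trans hq2 (Nat.le_self_pow (by omega) q)
  set d := q ^ n + 1 with hd
  have hd3 : 3 ≤ d := by omega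
  have heven : Even d := (hq.pow).add_one
  refine ⟨heven, ⟨n, hn, dvd_rfl⟩, ?_⟩
  set S := d.divisors.filter (fun e => 1 < e) with hS
  -- order bounds
  have horder : ∀ e ∈ S, 0 < orderOf ((q : ZMod e)) ∧ orderOf ((q : ZMod e)) ≤ 2 * n := by
    intro e he
    simp only [hS, Finset.mem_filter, Nat.mem_divisors] at he
    obtain ⟨⟨hed, hd0⟩, he1⟩ := he
    haveI : NeZero e := ⟨by omega⟩
    have hpow : (q : ZMod e) ^ (2 * n) = 1 := by
      have h0 : ((q ^ n + 1 : ℕ) : ZMod e) = 0 := by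
        rw [ZMod.natCast_eq_zero_iff]; exact hed
      push_cast at h0
      have hqn : (q : ZMod e) ^ n = -1 := by linear_combination h0
      calc (q : ZMod e) ^ (2 * n) = ((q : ZMod e) ^ n) ^ 2 := by
            rw [← pow_mul, Nat.mul_comm]
        _ = 1 := by rw [hqn]; ring
    have hdvd : orderOf ((q : ZMod e)) ∣ 2 * n := orderOf_dvd_of_pow_eq_one hpow
    have h2n : 0 < 2 * n := by omega
    exact ⟨Nat.pos_of_ne_zero (fun h => by simp [h, zero_dvd_iff] at hdvd; omega),
      Nat.le_of_dvd h2n hdvd⟩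
  have h2S : 2 ∈ S := by
    simp only [hS, Finset.mem_filter, Nat.mem_divisors]
    exact ⟨⟨heven.two_dvd, by omega⟩, by omega⟩
  -- the e = 2 term is 1
  have hq2mod : (q : ZMod 2) = 1 := by
    obtain ⟨k, hk⟩ := hq
    subst hk
    push_cast
    rw [show (2 : ZMod 2) = 0 from rfl]
    ring
  have hterm2 : (Nat.totient 2 : ℝ) / (orderOf ((q : ZMod 2)) : ℝ) = 1 := by
    rw [hq2mod, orderOf_one]
    norm_num
  -- sum of totients over S is d - 1
  have hSerase : S = d.divisors.erase 1 := by
    ext e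
    simp only [hS, Finset.mem_filter, Finset.mem_erase, Nat.mem_divisors]
    constructor
    · rintro ⟨he, h1⟩; exact ⟨by omega, he⟩
    · rintro ⟨h1, he⟩
      have he0 : e ≠ 0 := by rintro rfl; rw [zero_dvd_iff] at he; omega
      exact ⟨he, by omega⟩
  have h1div : 1 ∈ d.divisors := Nat.one_mem_divisors.mpr (by omega)
  have htotS : ∑ e ∈ S, Nat.totient e = d - 1 := by
    have := Nat.sum_totient d
    rw [← Finset.add_sum_erase _ _ h1div] at this
    rw [hSerase]
    simp only [Nat.totient_one] at this
    omega
  have htotE : ∑ e ∈ S.erase 2, Nat.totient e = d - 2 := by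
    have := Finset.add_sum_erase _ Nat.totient h2S
    rw [htotS] at this
    simp only [Nat.totient_two] at this
    omega
  -- lower bound the sum
  have hnR : (0 : ℝ) < 2 * n := by positivity
  have hsum_lb : Iq q d ≥ 1 + ((d : ℝ) - 2) / (2 * n) := by
    have : Iq q d = (Nat.totient 2 : ℝ) / (orderOf ((q : ZMod 2)) : ℝ)
        + ∑ e ∈ S.erase 2, (Nat.totient e : ℝ) / (orderOf ((q : ZMod e)) : ℝ) := by
      rw [Iq, ← hS, ← Finset.add_sum_erase _ _ h2S]
    rw [this, hterm2]
    gcongr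
    calc ((d : ℝ) - 2) / (2 * n) = ∑ e ∈ S.erase 2, (Nat.totient e : ℝ) / (2 * n) := by
          rw [← Finset.sum_div]
          congr 1
          rw [← Nat.cast_sum, htotE]
          push_cast [Nat.cast_sub (by omega : 2 ≤ d)]
          ring
      _ ≤ ∑ e ∈ S.erase 2, (Nat.totient e : ℝ) / (orderOf ((q : ZMod e)) : ℝ) := by
          apply Finset.sum_le_sum
          intro e he
          have he' : e ∈ S := Finset.mem_of_mem_erase he
          obtain ⟨hpos, hle⟩ := horder e he'
          apply div_le_div_of_nonneg_left (by positivity) (by exact_mod_cast hpos)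
          exact_mod_cast hle
  -- now the analytic chain
  have hdR : (3 : ℝ) ≤ (d : ℝ) := by exact_mod_cast hd3
  have hlb2 : (d : ℝ) / (2 * n) ≤ 1 + ((d : ℝ) - 2) / (2 * n) := by
    have hn1 : (1 : ℝ) ≤ n := by exact_mod_cast hn
    have hnn : (0 : ℝ) < n := by linarith
    have h : (d : ℝ) / (2 * n) - ((d : ℝ) - 2) / (2 * n) = 1 / n := by
      field_simp
      ring
    have h2 : (1 : ℝ) / n ≤ 1 := by rw [div_le_one hnn]; exact hn1
    linarith
  have hlogq : (0 : ℝ) < Real.log q := Real.log_pos (by exact_mod_cast hq2)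
  have hlogd : (0 : ℝ) < Real.log d := Real.log_pos (by linarith)
  have hkey : (n : ℝ) * Real.log q ≤ Real.log d := by
    rw [← Real.log_pow]
    apply Real.log_le_log (by positivity)
    have : ((q ^ n : ℕ) : ℝ) ≤ (d : ℝ) := by exact_mod_cast Nat.le_succ _
    calc (q : ℝ) ^ n = ((q ^ n : ℕ) : ℝ) := by push_cast; ring
      _ ≤ (d : ℝ) := this
  have hfinal : Real.log (Real.sqrt q) * (d : ℝ) / Real.log d ≤ (d : ℝ) / (2 * n) := by
    rw [Real.log_sqrt (by positivity)]
    rw [div_le_div_iff₀ hlogd hnR]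
    have hn1 : (1 : ℝ) ≤ n := by exact_mod_cast hn
    nlinarith
  have hcast : ((q : ℝ) ^ n + 1) = (d : ℝ) := by push_cast [hd]; ring
  rw [ge_iff_le, hcast]
  calc Real.log (Real.sqrt q) * (d : ℝ) / Real.log d ≤ (d : ℝ) / (2 * n) := hfinal
    _ ≤ 1 + ((d : ℝ) - 2) / (2 * n) := hlb2
    _ ≤ Iq q d := hsum_lb
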